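/- The action of the symmetric group S_r on 𝓔 is free (i.e., if σ·ε = ε for some ε ∈ 𝓔 then σ is the identity permutation) if and only if J = {1, …, r}; in that case 𝓔 has exactly r! elements. -/
import Mathlib


/-- The set 𝓔 of functions `ε : {1,…,r} × J → {0,1}` (indexed by `Fin r` and the
subtype of members of `J`), such that each column `j` sums to `j` and each row is
nondecreasing in `j ∈ J`. -/
def IsE (r : ℕ) (J : Finset ℕ) (ε : Fin r → {j // j ∈ J} → ℕ) : Prop :=
  (∀ k j, ε k j ≤ 1) ∧
  (∀ j : {j // j ∈ J}, ∑ k : Fin r, ε k j = (j : ℕ)) ∧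
  (∀ (k : Fin r) (j j' : {j // j ∈ J}), (j : ℕ) ≤ (j' : ℕ) → ε k j ≤ ε k j')

lemma sum_ind (r j : ℕ) (hj : j ≤ r) :
    ∑ k : Fin r, (if (k : ℕ) < j then 1 else 0) = j := by
  rw [Fin.sum_univ_eq_sum_range (fun i => if i < j then (1:ℕ) else 0) r]
  have h : ∀ i ∈ Finset.range r,
      (if i < j then 1 else 0) = if i ∈ Finset.range j then (1:ℕ) else 0 := by
    intro i _; simp [Finset.mem_range]
  rw [Finset.sum_congr rfl h, Finset.sum_ite_mem]
  have : Finset.range r ∩ Finset.range j = Finset.range j := by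
    ext x; simp [Finset.mem_range]; omega
  simp [this]

/-- The element of 𝓔 (for `J = Icc 1 r`) associated to a permutation. -/
def epsOf (r : ℕ) (π : Equiv.Perm (Fin r)) : Fin r → {j // j ∈ Finset.Icc 1 r} → ℕ :=
  fun k j => if (π.symm k : ℕ) < (j : ℕ) then 1 else 0

lemma isE_epsOf (r : ℕ) (π : Equiv.Perm (Fin r)) : IsE r (Finset.Icc 1 r) (epsOf r π) := by
  refine ⟨fun k j => by unfold epsOf; split <;> simp, fun j => ?_, fun k j j' h => ?_⟩
  · have hj := j.2
    rw [Finset.mem_Icc] at hj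
    have := Equiv.sum_comp π.symm (fun k : Fin r => if (k : ℕ) < (j : ℕ) then 1 else 0)
    calc ∑ k : Fin r, epsOf r π k j
        = ∑ k : Fin r, (if (k : ℕ) < (j:ℕ) then 1 else 0) := this
      _ = (j : ℕ) := sum_ind r _ hj.2
  · unfold epsOf
    split
    · rw [if_pos (by omega)]
    · split <;> simp

lemma epsOf_injective (r : ℕ) : Function.Injective (epsOf r) := by
  intro π π' h
  have key : ∀ (p p' : Equiv.Perm (Fin r)), epsOf r p = epsOf r p' →
      ∀ k, ((p.symm k) : ℕ) ≤ ((p'.symm k) : ℕ) := by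
    intro p p' hpp k
    by_contra hlt
    push_neg at hlt
    have hmem : ((p'.symm k : ℕ)) + 1 ∈ Finset.Icc 1 r := by
      rw [Finset.mem_Icc]
      exact ⟨by omega, (p'.symm k).isLt⟩
    have := congrFun (congrFun hpp k) ⟨_, hmem⟩
    unfold epsOf at this
    rw [if_neg (show ¬ ((p.symm k : ℕ) < (p'.symm k : ℕ) + 1) by omega),
      if_pos (Nat.lt_succ_self _)] at this
    exact one_ne_zero this.symm
  have : π.symm = π'.symm :=
    Equiv.ext fun k => Fin.ext (le_antisymm (key π π' h k) (key π' π h.symm k))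
  simpa using congrArg Equiv.symm this

lemma hcnt (r m : ℕ) (hm : 1 ≤ m) :
    (∑ j : {j // j ∈ Finset.Icc 1 r}, if m ≤ (j : ℕ) then (1:ℕ) else 0) = r + 1 - m := by
  rw [Finset.sum_coe_sort (Finset.Icc 1 r) (fun x => if m ≤ x then (1:ℕ) else 0),
    Finset.sum_boole]
  have : (Finset.Icc 1 r).filter (fun x => m ≤ x) = Finset.Icc m r := by
    ext x; simp [Finset.mem_Icc, Finset.mem_filter]; omega
  rw [this, Nat.card_Icc]
  exact Nat.cast_id _

lemma exists_epsOf (r : ℕ) (hr : 1 ≤ r) (ε : Fin r → {j // j ∈ Finset.Icc 1 r} → ℕ)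
    (hε : IsE r (Finset.Icc 1 r) ε) : ∃ π : Equiv.Perm (Fin r), ε = epsOf r π := by
  obtain ⟨h1, h2, h3⟩ := hε
  set s : Fin r → ℕ := fun k => ∑ j : {j // j ∈ Finset.Icc 1 r}, ε k j with hs
  have hrmem : r ∈ Finset.Icc 1 r := by simp [Finset.mem_Icc]; omega
  have hcol_r : ∀ k, ε k ⟨r, hrmem⟩ = 1 := by
    intro k
    have hle : ∀ k' : Fin r, k' ∈ Finset.univ → ε k' ⟨r, hrmem⟩ ≤ 1 := fun k' _ => h1 k' _
    have heq : ∑ k' : Fin r, ε k' ⟨r, hrmem⟩ = ∑ _k' : Fin r, 1 := by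
      rw [h2 ⟨r, hrmem⟩]; simp
    exact (Finset.sum_eq_sum_iff_of_le hle).mp heq k (Finset.mem_univ k)
  have hs1 : ∀ k, 1 ≤ s k := by
    intro k
    have := Finset.single_le_sum (f := fun j : {j // j ∈ Finset.Icc 1 r} => ε k j)
      (fun j _ => Nat.zero_le _) (Finset.mem_univ ⟨r, hrmem⟩)
    simp only [hcol_r] at this
    exact this
  have key : ∀ k (j : {j // j ∈ Finset.Icc 1 r}), ε k j = if r - s k < (j:ℕ) then 1 else 0 := by
    intro k j
    have hj := j.2; rw [Finset.mem_Icc] at hj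
    rcases Nat.le_one_iff_eq_zero_or_eq_one.mp (h1 k j) with h0 | hone
    · have hb : s k ≤ ∑ j' : {j // j ∈ Finset.Icc 1 r}, if (j:ℕ) + 1 ≤ (j':ℕ) then 1 else 0 := by
        apply Finset.sum_le_sum
        intro x _
        by_cases hx : (j:ℕ) + 1 ≤ (x:ℕ)
        · rw [if_pos hx]; exact h1 k x
        · rw [if_neg hx]
          have := h3 k x j (by omega)
          omega
      rw [hcnt r ((j:ℕ)+1) (by omega)] at hb
      rw [h0, if_neg (by omega)]
    · have hb : (∑ j' : {j // j ∈ Finset.Icc 1 r}, if (j:ℕ) ≤ (j':ℕ) then 1 else 0) ≤ s k := by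
        apply Finset.sum_le_sum
        intro x _
        by_cases hx : (j:ℕ) ≤ (x:ℕ)
        · rw [if_pos hx]
          have := h3 k j x hx; omega
        · rw [if_neg hx]; exact Nat.zero_le _
      rw [hcnt r (j:ℕ) (by omega)] at hb
      rw [hone, if_pos (by omega)]
  have hlt : ∀ k, r - s k < r := fun k => by have := hs1 k; omega
  set g : Fin r → Fin r := fun k => ⟨r - s k, hlt k⟩ with hg
  have hcard : ∀ j : {j // j ∈ Finset.Icc 1 r},
      (Finset.univ.filter (fun k : Fin r => r - s k < (j:ℕ))).card = (j:ℕ) := by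
    intro j
    have h2j := h2 j
    rw [Finset.sum_congr rfl (fun k _ => key k j), Finset.sum_boole] at h2j
    exact_mod_cast h2j
  have ginj : Function.Injective g := by
    intro k k' hkk
    have hvv : r - s k = r - s k' := congrArg Fin.val hkk
    set v := r - s k with hv
    have hm1 : (v+1) ∈ Finset.Icc 1 r := by rw [Finset.mem_Icc]; have := hlt k; omega
    have hA : (Finset.univ.filter (fun k'' : Fin r => r - s k'' < v + 1)).card = v + 1 :=
      hcard ⟨v+1, hm1⟩
    have hBcard : (Finset.univ.filter (fun k'' : Fin r => r - s k'' < v)).card = v := by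
      rcases Nat.eq_zero_or_pos v with h0' | hpos
      · rw [h0']; simp
      · have hm2 : v ∈ Finset.Icc 1 r := by rw [Finset.mem_Icc]; have := hlt k; omega
        exact hcard ⟨v, hm2⟩
    have hsub : (Finset.univ.filter (fun k'' : Fin r => r - s k'' < v)) ⊆
        (Finset.univ.filter (fun k'' : Fin r => r - s k'' < v + 1)) :=
      by intro x hx; simp only [Finset.mem_filter] at hx ⊢; exact ⟨hx.1, by omega⟩
    have hdiff : ((Finset.univ.filter (fun k'' : Fin r => r - s k'' < v + 1)) \
        (Finset.univ.filter (fun k'' : Fin r => r - s k'' < v))).card = 1 := by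
      rw [Finset.card_sdiff_of_subset hsub, hBcard, hA]
      omega
    rw [Finset.card_eq_one] at hdiff
    obtain ⟨a, ha⟩ := hdiff
    have hkA : k ∈ (Finset.univ.filter (fun k'' : Fin r => r - s k'' < v + 1)) \
        (Finset.univ.filter (fun k'' : Fin r => r - s k'' < v)) := by
      simp only [Finset.mem_sdiff, Finset.mem_filter, Finset.mem_univ, true_and]; omega
    have hk'A : k' ∈ (Finset.univ.filter (fun k'' : Fin r => r - s k'' < v + 1)) \
        (Finset.univ.filter (fun k'' : Fin r => r - s k'' < v)) := by
      simp only [Finset.mem_sdiff, Finset.mem_filter, Finset.mem_univ, true_and]; omega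
    rw [ha, Finset.mem_singleton] at hkA hk'A
    rw [hkA, hk'A]
  have gbij : Function.Bijective g := Finite.injective_iff_bijective.mp ginj
  refine ⟨(Equiv.ofBijective g gbij).symm, ?_⟩
  funext k j
  rw [key k j]
  unfold epsOf
  rw [Equiv.symm_symm]
  rfl

/-- If some `m ∈ [1,r]` is missing from `J`, the action is not free. -/
lemma not_free (r : ℕ) (J : Finset ℕ) (hJ : J ⊆ Finset.Icc 1 r) (hrJ : r ∈ J)
    (m : ℕ) (hm : m ∈ Finset.Icc 1 r) (hmJ : m ∉ J) :
    ∃ (σ : Equiv.Perm (Fin r)) (ε : Fin r → {j // j ∈ J} → ℕ),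
      IsE r J ε ∧ (fun k j => ε (σ⁻¹ k) j) = ε ∧ σ ≠ 1 := by
  rw [Finset.mem_Icc] at hm
  have hmr : m < r := lt_of_le_of_ne hm.2 (fun h => hmJ (h ▸ hrJ))
  set ε : Fin r → {j // j ∈ J} → ℕ := fun k j => if (k : ℕ) < (j : ℕ) then 1 else 0 with hεdef
  set a : Fin r := ⟨m - 1, by omega⟩ with ha
  set b : Fin r := ⟨m, hmr⟩ with hb
  have hab : a ≠ b := by
    intro h
    have := congrArg Fin.val h
    simp [ha, hb] at this
    omega
  refine ⟨Equiv.swap a b, ε, ⟨fun k j => by simp only [hεdef]; split <;> simp,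
    fun j => ?_, fun k j j' h => ?_⟩, ?_, ?_⟩
  · have hj := hJ j.2
    rw [Finset.mem_Icc] at hj
    exact sum_ind r _ hj.2
  · simp only [hεdef]
    split
    · rw [if_pos (by omega)]
    · split <;> simp
  · funext k j
    have hiff : ∀ k' k'' : Fin r, (k':ℕ) + 1 = m → (k'':ℕ) = m → ε k' j = ε k'' j := by
      intro k' k'' h1 h2
      have hjm : (j : ℕ) ≠ m := fun h => hmJ (h ▸ j.2)
      simp only [hεdef]
      by_cases hc : (k' : ℕ) < (j : ℕ)
      · rw [if_pos hc, if_pos (by omega)]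
      · rw [if_neg hc, if_neg (by omega)]
    rw [Equiv.swap_inv]
    rcases eq_or_ne k a with rfl | hka
    · rw [Equiv.swap_apply_left]
      exact (hiff a b (by simp [ha]; omega) (by simp [hb])).symm
    rcases eq_or_ne k b with rfl | hkb
    · rw [Equiv.swap_apply_right]
      exact hiff a b (by simp [ha]; omega) (by simp [hb])
    · rw [Equiv.swap_apply_of_ne_of_ne hka hkb]
  · intro h
    exact hab (Equiv.swap_eq_one_iff.mp h)

/-- the action of `S_r` on 𝓔 is free iff `J = {1,…,r}`; in that case 𝓔
has exactly `r!` elements. -/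
theorem stmt_3 (r : ℕ) (hr : 1 ≤ r) (J : Finset ℕ)
    (hJ : J ⊆ Finset.Icc 1 r) (hrJ : r ∈ J) :
    ((∀ (σ : Equiv.Perm (Fin r)) (ε : Fin r → {j // j ∈ J} → ℕ),
        IsE r J ε → (fun k j => ε (σ⁻¹ k) j) = ε → σ = 1) ↔
      J = Finset.Icc 1 r) ∧
    (J = Finset.Icc 1 r →
      {ε : Fin r → {j // j ∈ J} → ℕ | IsE r J ε}.ncard = r.factorial) := by
  constructor
  · constructor
    · intro hfree
      by_contra hne
      obtain ⟨m, hm, hmJ⟩ := Finset.exists_of_ssubset (lt_of_le_of_ne hJ hne)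
      obtain ⟨σ, ε, hε, hfix, hσ⟩ := not_free r J hJ hrJ m hm hmJ
      exact hσ (hfree σ ε hε hfix)
    · intro hJfull
      subst hJfull
      intro σ ε hε hfix
      obtain ⟨π, rfl⟩ := exists_epsOf r hr ε hε
      have hmul : epsOf r (σ * π) = epsOf r π := by
        rw [← hfix]
        rfl
      have hσπ : σ * π = π := epsOf_injective r hmul
      exact mul_right_cancel (hσπ.trans (one_mul π).symm)
  · intro hJfull
    subst hJfull
    have hset : {ε : Fin r → {j // j ∈ Finset.Icc 1 r} → ℕ | IsE r (Finset.Icc 1 r) ε}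
        = Set.range (epsOf r) := by
      ext ε
      constructor
      · intro hε
        obtain ⟨π, rfl⟩ := exists_epsOf r hr ε hε
        exact ⟨π, rfl⟩
      · rintro ⟨π, rfl⟩
        exact isE_epsOf r π
    rw [hset, ← Nat.card_coe_set_eq, Nat.card_range_of_injective (epsOf_injective r),
      Nat.card_eq_fintype_card, Fintype.card_perm, Fintype.card_fin]
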